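/- Let n ≥ 3, let 0 < s < n be an integer, let C = τ₁·I_n + τ₂·J_n with τ₁ > 0 and τ₂ > 0 (I_n the identity and J_n the all-ones matrix), and let γ > 0. Then no optimal solution of the scaled linx problem lies in {0,1}^n; that is, for every x ∈ P(n,s) ∩ {0,1}^n, f(C,s;γ;x) < linx(C,s;γ). -/

import Mathlib

open Matrix Real Set

noncomputable section

/-- The feasible polytope `P(n,s)`. -/
def PP (n s : ℕ) : Set (Fin n → ℝ) :=
  {x | (∑ i, x i) = (s : ℝ) ∧ ∀ i, 0 ≤ x i ∧ x i ≤ 1}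

/-- The scaled linx objective `f(C,s;γ;x)`. -/
def fLinxScaled {n : ℕ} (C : Matrix (Fin n) (Fin n) ℝ) (s : ℕ) (γ : ℝ) (x : Fin n → ℝ) : ℝ :=
  (1 / 2) * (Real.log ((γ • (C * Matrix.diagonal x * C) + Matrix.diagonal fun i => 1 - x i).det)
    - (s : ℝ) * Real.log γ)

/-- The scaled linx bound `linx(C,s;γ)`. -/
def linxScaled (n s : ℕ) (C : Matrix (Fin n) (Fin n) ℝ) (γ : ℝ) : ℝ :=
  sSup (fLinxScaled C s γ '' PP n s)

lemma det_aux (n : ℕ) (γ τ₁ τ₂ : ℝ) (y d : Fin n → ℝ)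
    (hd : ∀ i, d i = γ * τ₁^2 * y i + 1 - y i) (hd0 : ∀ i, d i ≠ 0) :
    (γ • ((τ₁ • (1 : Matrix (Fin n) (Fin n) ℝ) + τ₂ • Matrix.of (fun _ _ => (1:ℝ))) *
        Matrix.diagonal y *
        (τ₁ • (1 : Matrix (Fin n) (Fin n) ℝ) + τ₂ • Matrix.of (fun _ _ => (1:ℝ)))) +
      Matrix.diagonal (fun i => 1 - y i)).det
    = (∏ i, d i) *
      ((1 + γ*τ₁*τ₂*(∑ i, y i / d i))^2
        + γ*τ₂^2*(∑ i, 1 / d i) * ((∑ i, y i) - γ*τ₁^2*(∑ i, (y i)^2 / d i))) := by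
  set A : Matrix (Fin n) (Fin n) ℝ := τ₁ • (1 : Matrix (Fin n) (Fin n) ℝ) + τ₂ • Matrix.of (fun _ _ => (1:ℝ)) with hA
  set σ : ℝ := ∑ i, y i with hσ
  set U : Matrix (Fin n) (Fin 2) ℝ := Matrix.of fun i j => if j = 0 then y i else 1 with hU
  set V : Matrix (Fin 2) (Fin n) ℝ := Matrix.of fun j i =>
    if j = 0 then γ*τ₁*τ₂ else γ*τ₁*τ₂*y i + γ*σ*τ₂^2 with hV
  have hAe : ∀ i k, A i k = (if i = k then τ₁ else 0) + τ₂ := by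
    intro i k
    simp [hA, Matrix.add_apply, Matrix.smul_apply, Matrix.one_apply, mul_ite, mul_one, mul_zero]
  have key : ∀ i j, (A * Matrix.diagonal y * A) i j
      = τ₁^2 * (if i = j then y i else 0) + τ₁*τ₂*y i + τ₁*τ₂*y j + τ₂^2*σ := by
    intro i j
    rw [Matrix.mul_apply]
    have h1 : ∀ k, (A * Matrix.diagonal y) i k * A k j
        = (if i = k then τ₁ * y k * ((if k = j then τ₁ else 0) + τ₂) else 0)
          + (if k = j then τ₂ * y k * τ₁ else 0) + τ₂ * y k * τ₂ := by
      intro k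
      rw [Matrix.mul_diagonal, hAe, hAe]
      split_ifs <;> ring
    rw [Finset.sum_congr rfl (fun k _ => h1 k)]
    rw [Finset.sum_add_distrib, Finset.sum_add_distrib, Finset.sum_ite_eq, Finset.sum_ite_eq',
      ← Finset.sum_mul, ← Finset.mul_sum]
    simp only [Finset.mem_univ, if_true, ← hσ]
    split_ifs <;> ring
  have hM : γ • (A * Matrix.diagonal y * A) + Matrix.diagonal (fun i => 1 - y i)
      = Matrix.diagonal d + U * V := by
    ext i j
    have hUV : (U * V) i j = y i * (γ*τ₁*τ₂) + (γ*τ₁*τ₂*y j + γ*σ*τ₂^2) := by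
      rw [Matrix.mul_apply, Fin.sum_univ_two]
      simp [hU, hV]
    simp only [Matrix.add_apply, Matrix.smul_apply, key, hUV, Matrix.diagonal_apply, hd,
      smul_eq_mul]
    split_ifs <;> ring
  rw [hM]
  have h2 : Matrix.diagonal d + U * V
      = Matrix.diagonal d * (1 + (Matrix.diagonal (fun i => (d i)⁻¹) * U) * V) := by
    rw [Matrix.mul_add, Matrix.mul_one, ← Matrix.mul_assoc, ← Matrix.mul_assoc,
      Matrix.diagonal_mul_diagonal]
    congr 1
    have he : (fun i => d i * (d i)⁻¹) = fun _ : Fin n => (1:ℝ) :=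
      funext fun i => mul_inv_cancel₀ (hd0 i)
    rw [he, Matrix.diagonal_one, Matrix.one_mul]
  rw [h2, Matrix.det_mul, Matrix.det_diagonal, Matrix.det_one_add_mul_comm]
  congr 1
  set W := V * (Matrix.diagonal (fun i => (d i)⁻¹) * U) with hW
  have hWe : ∀ a b, W a b = ∑ i, V a i * ((d i)⁻¹ * U i b) := by
    intro a b
    rw [hW, Matrix.mul_apply]
    refine Finset.sum_congr rfl fun i _ => ?_
    rw [Matrix.diagonal_mul]
  have hU0 : ∀ i, U i 0 = y i := by intro i; simp [hU]
  have hU1 : ∀ i, U i 1 = 1 := by intro i; simp [hU]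
  have hV0 : ∀ i, V 0 i = γ*τ₁*τ₂ := by intro i; simp [hV]
  have hV1 : ∀ i, V 1 i = γ*τ₁*τ₂*y i + γ*σ*τ₂^2 := by intro i; simp [hV]
  have w00 : W 0 0 = γ*τ₁*τ₂ * ∑ i, y i / d i := by
    rw [hWe, Finset.mul_sum]
    refine Finset.sum_congr rfl fun i _ => ?_
    rw [hV0, hU0, div_eq_mul_inv]; ring
  have w01 : W 0 1 = γ*τ₁*τ₂ * ∑ i, 1 / d i := by
    rw [hWe, Finset.mul_sum]
    refine Finset.sum_congr rfl fun i _ => ?_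
    rw [hV0, hU1, div_eq_mul_inv]; ring
  have w10 : W 1 0 = γ*τ₁*τ₂ * (∑ i, (y i)^2 / d i) + γ*σ*τ₂^2 * ∑ i, y i / d i := by
    rw [hWe, Finset.mul_sum, Finset.mul_sum, ← Finset.sum_add_distrib]
    refine Finset.sum_congr rfl fun i _ => ?_
    rw [hV1, hU0, div_eq_mul_inv]; ring
  have w11 : W 1 1 = γ*τ₁*τ₂ * (∑ i, y i / d i) + γ*σ*τ₂^2 * ∑ i, 1 / d i := by
    rw [hWe, Finset.mul_sum, Finset.mul_sum, ← Finset.sum_add_distrib]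
    refine Finset.sum_congr rfl fun i _ => ?_
    rw [hV1, hU1, div_eq_mul_inv]; ring
  rw [Matrix.det_fin_two]
  simp only [Matrix.add_apply, Matrix.one_apply, w00, w01, w10, w11]
  norm_num
  ring

lemma key_ineq (g t1 t2 a b : ℝ) (hg : 0 < g) (h1 : 0 < t1) (h2 : 0 < t2)
    (ha : 0 ≤ a) (hb : 0 ≤ b) (hab : 1 ≤ a + b) :
    4*g*(t1+(a+1)*t2)^2
      < ((g+1)*(t1+a*t2)+2*g*t2)^2 + a*(g+1)*t2^2 + 4*g*t2^2 + b*g*(g+1)*t2^2 := by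
  have hpos : 0 < a + b * g := by
    rcases eq_or_lt_of_le ha with h | h
    · have hb1 : 1 ≤ b := by linarith
      nlinarith
    · nlinarith [mul_nonneg hb hg.le]
  nlinarith [sq_nonneg ((g-1)*(t1+a*t2)+2*g*t2),
    mul_pos hpos (mul_pos (by linarith : (0:ℝ) < g+1) (mul_pos h2 h2))]

lemma log_le_abs' (w : ℝ) : Real.log w ≤ |w| := by
  rcases eq_or_ne w 0 with h | h
  · simp [h]
  · calc Real.log w = Real.log |w| := (Real.log_abs w).symm
      _ ≤ |w| - 1 := Real.log_le_sub_one_of_pos (abs_pos.2 h)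
      _ ≤ |w| := by linarith

lemma bdd_above_fLinx (n s : ℕ) (C : Matrix (Fin n) (Fin n) ℝ) (γ : ℝ) :
    BddAbove (fLinxScaled C s γ '' PP n s) := by
  have hcompact : IsCompact (PP n s) := by
    have hsub : PP n s ⊆ Set.Icc (fun _ => (0:ℝ)) (fun _ => 1) := by
      intro x hx
      constructor
      · intro i; exact (hx.2 i).1
      · intro i; exact (hx.2 i).2
    have hclosed : IsClosed (PP n s) := by
      have h1 : IsClosed {x : Fin n → ℝ | (∑ i, x i) = (s : ℝ)} :=
        isClosed_eq (by continuity) continuous_const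
      have h2 : IsClosed {x : Fin n → ℝ | ∀ i, 0 ≤ x i ∧ x i ≤ 1} := by
        have : {x : Fin n → ℝ | ∀ i, 0 ≤ x i ∧ x i ≤ 1} =
            ⋂ i, ({x : Fin n → ℝ | 0 ≤ x i} ∩ {x | x i ≤ 1}) := by
          ext x; simp [Set.mem_iInter]
        rw [this]
        exact isClosed_iInter fun i =>
          ((isClosed_le continuous_const (continuous_apply i)).inter
            (isClosed_le (continuous_apply i) continuous_const))
      exact h1.inter h2
    exact (isCompact_Icc).of_isClosed_subset hclosed hsub
  have hcont : Continuous fun x : Fin n → ℝ =>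
      |(γ • (C * Matrix.diagonal x * C) + Matrix.diagonal fun i => 1 - x i).det| := by
    have h1 : Continuous fun x : Fin n → ℝ =>
        γ • (C * Matrix.diagonal x * C) + Matrix.diagonal fun i => 1 - x i := by
      refine Continuous.add ?_ ?_
      · exact ((continuous_const.matrix_mul (Continuous.matrix_diagonal continuous_id)).matrix_mul
          continuous_const).const_smul γ
      · exact Continuous.matrix_diagonal
          (continuous_pi fun i => continuous_const.sub (continuous_apply i))
    exact h1.matrix_det.abs
  have himg : IsCompact ((fun x : Fin n → ℝ =>
      |(γ • (C * Matrix.diagonal x * C) + Matrix.diagonal fun i => 1 - x i).det|) '' PP n s) :=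
    hcompact.image hcont
  obtain ⟨K, hK⟩ := himg.bddAbove
  refine ⟨(1/2) * (K + |(s:ℝ) * Real.log γ|), ?_⟩
  rintro w ⟨z, hz, rfl⟩
  have h1 : |(γ • (C * Matrix.diagonal z * C) + Matrix.diagonal fun i => 1 - z i).det| ≤ K :=
    hK (Set.mem_image_of_mem _ hz)
  have h2 := log_le_abs' ((γ • (C * Matrix.diagonal z * C) + Matrix.diagonal fun i => 1 - z i).det)
  have h3 : -((s:ℝ) * Real.log γ) ≤ |(s:ℝ) * Real.log γ| := neg_le_abs _
  unfold fLinxScaled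
  nlinarith [h2.trans h1]

theorem stmt_14 (n s : ℕ) (hn : 3 ≤ n) (hs : 0 < s) (hsn : s < n)
    (τ₁ τ₂ : ℝ) (hτ₁ : 0 < τ₁) (hτ₂ : 0 < τ₂)
    (C : Matrix (Fin n) (Fin n) ℝ)
    (hC : C = τ₁ • (1 : Matrix (Fin n) (Fin n) ℝ) + τ₂ • Matrix.of (fun _ _ => (1 : ℝ)))
    (γ : ℝ) (hγ : 0 < γ) :
    ∀ x ∈ PP n s, (∀ i, x i = 0 ∨ x i = 1) →
      fLinxScaled C s γ x < linxScaled n s C γ := by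
  subst hC
  intro x hx hx01
  obtain ⟨hxsum, hxbd⟩ := hx
  -- find p with x p = 1 and q with x q = 0
  have hex_p : ∃ p, x p = 1 := by
    by_contra h
    push_neg at h
    have h0 : ∀ i, x i = 0 := fun i => (hx01 i).resolve_right (h i)
    rw [Finset.sum_congr rfl (fun i _ => h0 i), Finset.sum_const, smul_zero] at hxsum
    have : s = 0 := by exact_mod_cast hxsum.symm
    omega
  have hex_q : ∃ q, x q = 0 := by
    by_contra h
    push_neg at h
    have h1 : ∀ i, x i = 1 := fun i => (hx01 i).resolve_left (h i)
    rw [Finset.sum_congr rfl (fun i _ => h1 i), Finset.sum_const, Finset.card_univ,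
      Fintype.card_fin, nsmul_eq_mul, mul_one] at hxsum
    have : n = s := by exact_mod_cast hxsum
    omega
  obtain ⟨p, hp⟩ := hex_p
  obtain ⟨q, hq⟩ := hex_q
  have hpq : p ≠ q := by
    intro h; rw [h, hq] at hp; norm_num at hp
  -- abbreviations
  set g := γ * τ₁ ^ 2 with hg
  have hg0 : (0:ℝ) < g := by positivity
  have hgne : g ≠ 0 := ne_of_gt hg0
  set m := (g + 1) / 2 with hm
  have hm0 : (0:ℝ) < m := by rw [hm]; positivity
  have hmne : m ≠ 0 := ne_of_gt hm0
  have ht1ne : τ₁ ≠ 0 := ne_of_gt hτ₁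
  -- vertex diagonal
  set dx : Fin n → ℝ := fun i => γ * τ₁ ^ 2 * x i + 1 - x i with hdxdef
  have hdxv : ∀ i, dx i = if x i = 1 then g else 1 := by
    intro i
    rcases hx01 i with h | h
    · rw [hdxdef]; simp [h]
    · rw [hdxdef]; simp [h, hg]
  have hdx0 : ∀ i, dx i ≠ 0 := by
    intro i; rw [hdxv i]; split_ifs; exacts [hgne, one_ne_zero]
  -- cardinality
  have hcast : ∀ (t : Finset (Fin n)), ∑ i ∈ t, x i = ((t.filter fun i => x i = 1).card : ℝ) := by
    intro t
    rw [Finset.sum_congr rfl (fun i (_ : i ∈ t) => show x i = if x i = 1 then (1:ℝ) else 0 by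
      rcases hx01 i with h | h <;> simp [h])]
    exact Finset.sum_boole _ _
  have hcardN : (Finset.univ.filter fun i => x i = 1).card = s := by
    have := (hcast Finset.univ).symm.trans hxsum
    exact_mod_cast this
  have hprodx : ∏ i, dx i = g ^ s := by
    rw [Finset.prod_congr rfl (fun i _ => hdxv i), Finset.prod_ite, Finset.prod_const,
      Finset.prod_const, one_pow, mul_one, hcardN]
  -- sums for x
  have hsum1x : ∑ i, x i / dx i = (s:ℝ) / g := by
    have e : ∀ i, x i / dx i = x i * g⁻¹ := by
      intro i
      rcases hx01 i with h | h
      · simp [h]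
      · rw [hdxv i, if_pos h, h, one_div, one_mul]
    rw [Finset.sum_congr rfl fun i _ => e i, ← Finset.sum_mul, hxsum, div_eq_mul_inv]
  have hsum2x : ∑ i, (x i)^2 / dx i = (s:ℝ) / g := by
    have e : ∀ i, (x i)^2 / dx i = x i * g⁻¹ := by
      intro i
      rcases hx01 i with h | h
      · simp [h]
      · rw [hdxv i, if_pos h, h, one_pow, one_div, one_mul]
    rw [Finset.sum_congr rfl fun i _ => e i, ← Finset.sum_mul, hxsum, div_eq_mul_inv]
  have hsum3x : ∑ i, 1 / dx i = (s:ℝ) * g⁻¹ + ((n:ℝ) - s) := by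
    have e : ∀ i, 1 / dx i = x i * g⁻¹ + (1 - x i) := by
      intro i
      rcases hx01 i with h | h
      · rw [hdxv i]; simp [h]
      · rw [hdxv i, if_pos h, h, one_div, one_mul]; ring
    rw [Finset.sum_congr rfl fun i _ => e i, Finset.sum_add_distrib, ← Finset.sum_mul, hxsum,
      Finset.sum_sub_distrib, Finset.sum_const, hxsum, Finset.card_univ, Fintype.card_fin,
      nsmul_eq_mul, mul_one]
  -- det at vertex
  have hdetx : (γ • ((τ₁ • (1 : Matrix (Fin n) (Fin n) ℝ) + τ₂ • Matrix.of (fun _ _ => (1:ℝ))) *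
        Matrix.diagonal x *
        (τ₁ • (1 : Matrix (Fin n) (Fin n) ℝ) + τ₂ • Matrix.of (fun _ _ => (1:ℝ)))) +
      Matrix.diagonal (fun i => 1 - x i)).det
      = g ^ s * (1 + γ*τ₁*τ₂*((s:ℝ)/g))^2 := by
    rw [det_aux n γ τ₁ τ₂ x dx (fun i => rfl) hdx0, hprodx, hsum1x, hsum2x, hsum3x, hxsum]
    have hz : (s:ℝ) - γ*τ₁^2*((s:ℝ)/g) = 0 := by
      rw [hg] at *
      field_simp
      ring
    rw [hz, mul_zero, add_zero]
  -- the perturbed point y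
  set y : Fin n → ℝ := Function.update (Function.update x p (1/2)) q (1/2) with hydef
  have hyp : y p = 1/2 := by
    rw [hydef, Function.update_of_ne hpq, Function.update_self]
  have hyq : y q = 1/2 := by rw [hydef, Function.update_self]
  have hyo : ∀ i, i ≠ p → i ≠ q → y i = x i := by
    intro i h1 h2
    rw [hydef, Function.update_of_ne h2, Function.update_of_ne h1]
  -- the split finset
  have hqmem : q ∈ Finset.univ.erase p := Finset.mem_erase.2 ⟨hpq.symm, Finset.mem_univ q⟩
  set T : Finset (Fin n) := (Finset.univ.erase p).erase q with hTdef
  have hTne : ∀ i ∈ T, i ≠ p ∧ i ≠ q := by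
    intro i hi
    rw [hTdef, Finset.mem_erase, Finset.mem_erase] at hi
    exact ⟨hi.2.1, hi.1⟩
  have hTmem : ∀ i : Fin n, i ≠ p → i ≠ q → i ∈ T := by
    intro i h1 h2
    rw [hTdef, Finset.mem_erase, Finset.mem_erase]
    exact ⟨h2, h1, Finset.mem_univ i⟩
  have hsplit : ∀ f : Fin n → ℝ, ∑ i, f i = f p + (f q + ∑ i ∈ T, f i) := by
    intro f
    rw [← Finset.add_sum_erase _ f (Finset.mem_univ p), ← Finset.add_sum_erase _ f hqmem]
  -- sums over T for x
  have hsumTx : ∑ i ∈ T, x i = (s:ℝ) - 1 := by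
    have h1 : ∑ i, x i = x p + (x q + ∑ i ∈ T, x i) := hsplit x
    rw [hxsum, hp, hq] at h1
    linarith
  have hcardTN : (T.filter fun i => x i = 1).card = s - 1 := by
    have h1 := (hcast T).symm.trans hsumTx
    have h2 : (((T.filter fun i => x i = 1).card : ℕ) : ℝ) = ((s - 1 : ℕ) : ℝ) := by
      rw [h1, Nat.cast_sub (by omega : 1 ≤ s)]
      push_cast
      ring
    exact_mod_cast h2
  have hcardT : (T.card : ℝ) = (n:ℝ) - 2 := by
    have h1 : T.card = n - 2 := by
      rw [hTdef, Finset.card_erase_of_mem hqmem, Finset.card_erase_of_mem (Finset.mem_univ p),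
        Finset.card_univ, Fintype.card_fin]
      omega
    rw [h1]
    push_cast [Nat.cast_sub (by omega : 2 ≤ n)]
    ring
  have hsumT1x : ∑ i ∈ T, (1 - x i) = (n:ℝ) - s - 1 := by
    rw [Finset.sum_sub_distrib, Finset.sum_const, hsumTx, nsmul_eq_mul, mul_one, hcardT]
    ring
  -- diagonal for y
  set dy : Fin n → ℝ := fun i => γ * τ₁ ^ 2 * y i + 1 - y i with hdydef
  have hdyp : dy p = m := by
    rw [hdydef]
    show γ * τ₁ ^ 2 * y p + 1 - y p = m
    rw [hyp, hm, hg]; ring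
  have hdyq : dy q = m := by
    rw [hdydef]
    show γ * τ₁ ^ 2 * y q + 1 - y q = m
    rw [hyq, hm, hg]; ring
  have hdyT : ∀ i ∈ T, dy i = dx i := by
    intro i hi
    obtain ⟨h1, h2⟩ := hTne i hi
    rw [hdydef, hdxdef]
    show γ * τ₁ ^ 2 * y i + 1 - y i = _
    rw [hyo i h1 h2]
  have hdy0 : ∀ i, dy i ≠ 0 := by
    intro i
    by_cases h1 : i = p
    · rw [h1, hdyp]; exact hmne
    by_cases h2 : i = q
    · rw [h2, hdyq]; exact hmne
    rw [hdyT i (hTmem i h1 h2)]; exact hdx0 i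
  have hprody : ∏ i, dy i = m^2 * g^(s-1) := by
    have hps : ∏ i, dy i = dy p * (dy q * ∏ i ∈ T, dy i) := by
      rw [← Finset.mul_prod_erase _ dy (Finset.mem_univ p), ← Finset.mul_prod_erase _ dy hqmem]
    have hT : ∏ i ∈ T, dy i = g ^ (s-1) := by
      rw [Finset.prod_congr rfl (fun i hi => (hdyT i hi).trans (hdxv i)), Finset.prod_ite,
        Finset.prod_const, Finset.prod_const, one_pow, mul_one, hcardTN]
    rw [hps, hdyp, hdyq, hT]
    ring
  -- sums for y
  have hsumy : ∑ i, y i = (s:ℝ) := by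
    have h1 : ∑ i, y i = y p + (y q + ∑ i ∈ T, y i) := hsplit _
    rw [hyp, hyq, Finset.sum_congr rfl (fun i hi => hyo i (hTne i hi).1 (hTne i hi).2),
      hsumTx] at h1
    rw [h1]; ring
  have hsum1y : ∑ i, y i / dy i = 1/m + ((s:ℝ)-1) * g⁻¹ := by
    have h1 : ∑ i, y i / dy i = y p / dy p + (y q / dy q + ∑ i ∈ T, y i / dy i) := hsplit _
    have e : ∀ i ∈ T, y i / dy i = x i * g⁻¹ := by
      intro i hi
      obtain ⟨ha, hb⟩ := hTne i hi
      rw [hyo i ha hb, hdyT i hi]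
      rcases hx01 i with h | h
      · simp [h]
      · rw [hdxv i, if_pos h, h, one_div, one_mul]
    rw [h1, hyp, hyq, hdyp, hdyq, Finset.sum_congr rfl e, ← Finset.sum_mul, hsumTx]
    ring
  have hsum2y : ∑ i, (y i)^2 / dy i = 1/(2*m) + ((s:ℝ)-1) * g⁻¹ := by
    have h1 : ∑ i, (y i)^2 / dy i = (y p)^2 / dy p + ((y q)^2 / dy q + ∑ i ∈ T, (y i)^2 / dy i) :=
      hsplit _
    have e : ∀ i ∈ T, (y i)^2 / dy i = x i * g⁻¹ := by
      intro i hi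
      obtain ⟨ha, hb⟩ := hTne i hi
      rw [hyo i ha hb, hdyT i hi]
      rcases hx01 i with h | h
      · simp [h]
      · rw [hdxv i, if_pos h, h, one_pow, one_div, one_mul]
    rw [h1, hyp, hyq, hdyp, hdyq, Finset.sum_congr rfl e, ← Finset.sum_mul, hsumTx]
    field_simp
    ring
  have hsum3y : ∑ i, 1 / dy i = 2/m + (((s:ℝ)-1) * g⁻¹ + ((n:ℝ) - s - 1)) := by
    have h1 : ∑ i, 1 / dy i = 1 / dy p + (1 / dy q + ∑ i ∈ T, 1 / dy i) := hsplit _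
    have e : ∀ i ∈ T, 1 / dy i = x i * g⁻¹ + (1 - x i) := by
      intro i hi
      rw [hdyT i hi]
      rcases hx01 i with h | h
      · rw [hdxv i]; simp [h]
      · rw [hdxv i, if_pos h, h, one_div, one_mul]; ring
    rw [h1, hdyp, hdyq, Finset.sum_congr rfl e, Finset.sum_add_distrib, ← Finset.sum_mul,
      hsumTx, hsumT1x]
    ring
  -- det at y
  have hdety : (γ • ((τ₁ • (1 : Matrix (Fin n) (Fin n) ℝ) + τ₂ • Matrix.of (fun _ _ => (1:ℝ))) *
        Matrix.diagonal y *
        (τ₁ • (1 : Matrix (Fin n) (Fin n) ℝ) + τ₂ • Matrix.of (fun _ _ => (1:ℝ)))) +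
      Matrix.diagonal (fun i => 1 - y i)).det
      = (m^2 * g^(s-1)) *
        ((1 + γ*τ₁*τ₂*(1/m + ((s:ℝ)-1) * g⁻¹))^2
          + γ*τ₂^2*(2/m + (((s:ℝ)-1) * g⁻¹ + ((n:ℝ) - s - 1)))
            * ((s:ℝ) - γ*τ₁^2*(1/(2*m) + ((s:ℝ)-1) * g⁻¹))) := by
    rw [det_aux n γ τ₁ τ₂ y dy (fun i => rfl) hdy0, hprody, hsum1y, hsum2y, hsum3y, hsumy]
  -- scaled closed forms
  have hpow : g ^ s = g ^ (s-1) * g := by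
    rw [← pow_succ]
    congr 1
    omega
  have hx4 : (γ • ((τ₁ • (1 : Matrix (Fin n) (Fin n) ℝ) + τ₂ • Matrix.of (fun _ _ => (1:ℝ))) *
        Matrix.diagonal x *
        (τ₁ • (1 : Matrix (Fin n) (Fin n) ℝ) + τ₂ • Matrix.of (fun _ _ => (1:ℝ)))) +
      Matrix.diagonal (fun i => 1 - x i)).det * (4*τ₁^2)
      = g^(s-1) * (4*g*(τ₁+(((s:ℝ)-1)+1)*τ₂)^2) := by
    rw [hdetx, hpow]
    have F : g * (1 + γ*τ₁*τ₂*((s:ℝ)/g))^2 * (4*τ₁^2) = 4*g*(τ₁+(((s:ℝ)-1)+1)*τ₂)^2 := by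
      rw [hg]
      field_simp
      ring
    linear_combination g^(s-1) * F
  have hy4 : (γ • ((τ₁ • (1 : Matrix (Fin n) (Fin n) ℝ) + τ₂ • Matrix.of (fun _ _ => (1:ℝ))) *
        Matrix.diagonal y *
        (τ₁ • (1 : Matrix (Fin n) (Fin n) ℝ) + τ₂ • Matrix.of (fun _ _ => (1:ℝ)))) +
      Matrix.diagonal (fun i => 1 - y i)).det * (4*τ₁^2)
      = g^(s-1) * (((g+1)*(τ₁+((s:ℝ)-1)*τ₂)+2*g*τ₂)^2 + ((s:ℝ)-1)*(g+1)*τ₂^2 + 4*g*τ₂^2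
          + ((n:ℝ)-(s:ℝ)-1)*g*(g+1)*τ₂^2) := by
    rw [hdety]
    have F : (m^2) * ((1 + γ*τ₁*τ₂*(1/m + ((s:ℝ)-1) * g⁻¹))^2
          + γ*τ₂^2*(2/m + (((s:ℝ)-1) * g⁻¹ + ((n:ℝ) - s - 1)))
            * ((s:ℝ) - γ*τ₁^2*(1/(2*m) + ((s:ℝ)-1) * g⁻¹))) * (4*τ₁^2)
        = ((g+1)*(τ₁+((s:ℝ)-1)*τ₂)+2*g*τ₂)^2 + ((s:ℝ)-1)*(g+1)*τ₂^2 + 4*g*τ₂^2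
          + ((n:ℝ)-(s:ℝ)-1)*g*(g+1)*τ₂^2 := by
      rw [hm, hg]
      field_simp
      ring
    linear_combination g^(s-1) * F
  -- strict inequality between determinants
  have hkey := key_ineq g τ₁ τ₂ ((s:ℝ)-1) ((n:ℝ)-(s:ℝ)-1) hg0 hτ₁ hτ₂
    (by
      have : (1:ℝ) ≤ (s:ℝ) := by exact_mod_cast hs
      linarith)
    (by
      have : (s:ℝ) + 1 ≤ (n:ℝ) := by exact_mod_cast hsn
      linarith)
    (by
      have : (3:ℝ) ≤ (n:ℝ) := by exact_mod_cast hn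
      linarith)
  have hlt4 : (γ • ((τ₁ • (1 : Matrix (Fin n) (Fin n) ℝ) + τ₂ • Matrix.of (fun _ _ => (1:ℝ))) *
        Matrix.diagonal x *
        (τ₁ • (1 : Matrix (Fin n) (Fin n) ℝ) + τ₂ • Matrix.of (fun _ _ => (1:ℝ)))) +
      Matrix.diagonal (fun i => 1 - x i)).det * (4*τ₁^2)
      < (γ • ((τ₁ • (1 : Matrix (Fin n) (Fin n) ℝ) + τ₂ • Matrix.of (fun _ _ => (1:ℝ))) *
        Matrix.diagonal y *
        (τ₁ • (1 : Matrix (Fin n) (Fin n) ℝ) + τ₂ • Matrix.of (fun _ _ => (1:ℝ)))) +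
      Matrix.diagonal (fun i => 1 - y i)).det * (4*τ₁^2) := by
    rw [hx4, hy4]
    exact mul_lt_mul_of_pos_left hkey (pow_pos hg0 _)
  have hdetlt := lt_of_mul_lt_mul_right hlt4 (by positivity : (0:ℝ) ≤ 4*τ₁^2)
  have hdetxpos : 0 < (γ • ((τ₁ • (1 : Matrix (Fin n) (Fin n) ℝ) +
        τ₂ • Matrix.of (fun _ _ => (1:ℝ))) *
        Matrix.diagonal x *
        (τ₁ • (1 : Matrix (Fin n) (Fin n) ℝ) + τ₂ • Matrix.of (fun _ _ => (1:ℝ)))) +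
      Matrix.diagonal (fun i => 1 - x i)).det := by
    rw [hdetx]
    have h5 : (0:ℝ) < 1 + γ*τ₁*τ₂*((s:ℝ)/g) := by positivity
    exact mul_pos (pow_pos hg0 s) (pow_pos h5 2)
  -- y is feasible
  have hyPP : y ∈ PP n s := by
    constructor
    · exact hsumy
    · intro i
      by_cases h1 : i = p
      · rw [h1, hyp]; norm_num
      by_cases h2 : i = q
      · rw [h2, hyq]; norm_num
      rw [hyo i h1 h2]
      exact hxbd i
  -- conclude
  have hflt : fLinxScaled (τ₁ • (1 : Matrix (Fin n) (Fin n) ℝ) +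
        τ₂ • Matrix.of (fun _ _ => (1:ℝ))) s γ x
      < fLinxScaled (τ₁ • (1 : Matrix (Fin n) (Fin n) ℝ) +
        τ₂ • Matrix.of (fun _ _ => (1:ℝ))) s γ y := by
    have hlog := Real.log_lt_log hdetxpos hdetlt
    unfold fLinxScaled
    linarith
  exact lt_of_lt_of_le hflt (le_csSup (bdd_above_fLinx n s _ γ)
    (Set.mem_image_of_mem _ hyPP))
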